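/- Let Φ : M_n → M_n be a linear map and let 1 ≤ k ≤ n. Then the following are equivalent: (i) for every m ≥ 1 and every positive semidefinite ρ ∈ M_m ⊗ M_n with SN(ρ) ≤ k, the matrix (id_m ⊗ Φ)(ρ) is positive semidefinite; (ii) Φ is k-positive. (This is Corollary 4.4(c): Φ : OMAX^k(M_n) → M_n is completely positive if and only if Φ is k-positive.) -/

import Mathlib

open scoped ComplexOrder Kronecker
open Matrix

noncomputable section

/-- The standard inner product `⟨v, w⟩ = ∑ conj(vᵢ) wᵢ` on `I → ℂ`. -/
def inprod {I : Type*} [Fintype I] (v w : I → ℂ) : ℂ :=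
  ∑ i, (starRingEnd ℂ) (v i) * w i

/-- `v` is a unit vector. -/
def UnitVec {I : Type*} [Fintype I] (v : I → ℂ) : Prop :=
  inprod v v = 1

/-- The Schmidt rank of a vector in `ℂ^I ⊗ ℂ^J`, i.e. the rank of the associated
`I × J` coefficient matrix. -/
noncomputable def SchmidtRank {I J : Type*} [Fintype I] [Fintype J] (v : I × J → ℂ) : ℕ :=
  (Matrix.of fun i j => v (i, j)).rank

/-- The operator norm (largest singular value) of a matrix, as
`sup { |⟨v, A w⟩| : v, w unit vectors }`. -/
noncomputable def opNorm {I J : Type*} [Fintype I] [Fintype J] (A : Matrix I J ℂ) : ℝ :=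
  sSup { t : ℝ | ∃ v w, UnitVec v ∧ UnitVec w ∧ t = ‖inprod v (A.mulVec w)‖ }

/-- The `S(k)`-norm of `X ∈ M_I ⊗ M_J`. -/
noncomputable def SNorm {I J : Type*} [Fintype I] [Fintype J] (k : ℕ)
    (X : Matrix (I × J) (I × J) ℂ) : ℝ :=
  sSup { t : ℝ | ∃ v w : I × J → ℂ, UnitVec v ∧ UnitVec w ∧
    SchmidtRank v ≤ k ∧ SchmidtRank w ≤ k ∧
    t = ‖inprod v (X.mulVec w)‖ }

/-- `X` is a `k`-block positive (Hermitian) operator: `⟨v, X v⟩ ≥ 0` for every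
vector of Schmidt rank at most `k`. -/
def kBlockPos {I J : Type*} [Fintype I] [Fintype J] (k : ℕ)
    (X : Matrix (I × J) (I × J) ℂ) : Prop :=
  X.IsHermitian ∧ ∀ v : I × J → ℂ, SchmidtRank v ≤ k → 0 ≤ inprod v (X.mulVec v)

/-- `ρ` has Schmidt number at most `k` (in particular it is positive semidefinite):
it is a finite nonnegative combination of rank-one projections onto vectors of
Schmidt rank at most `k`. -/
def SchmidtNumberLE {I J : Type*} [Fintype I] [Fintype J] (k : ℕ)
    (ρ : Matrix (I × J) (I × J) ℂ) : Prop :=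
  ∃ (N : ℕ) (c : Fin N → ℝ) (v : Fin N → (I × J → ℂ)),
    (∀ i, 0 ≤ c i) ∧ (∀ i, SchmidtRank (v i) ≤ k) ∧
    ρ = ∑ i, (c i : ℂ) • Matrix.vecMulVec (v i) (star (v i))

/-- `id_I ⊗ Φ` : the map applying `Φ` to the second tensor factor. -/
noncomputable def tensorId {I : Type*} [Fintype I] {a b : ℕ}
    (Φ : Matrix (Fin a) (Fin a) ℂ →ₗ[ℂ] Matrix (Fin b) (Fin b) ℂ)
    (X : Matrix (I × Fin a) (I × Fin a) ℂ) : Matrix (I × Fin b) (I × Fin b) ℂ :=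
  Matrix.of fun p q => Φ (Matrix.of fun s t => X (p.1, s) (q.1, t)) p.2 q.2

/-- The trace norm `‖X‖_tr = Tr √(X^* X)`. -/
noncomputable def trNorm {I : Type*} [Fintype I] [DecidableEq I] (X : Matrix I I ℂ) : ℝ :=
  (((Matrix.posSemidef_conjTranspose_mul_self X).1.eigenvectorUnitary : Matrix I I ℂ) *
    Matrix.diagonal ((fun r : ℝ => (r : ℂ)) ∘ (√·) ∘ (Matrix.posSemidef_conjTranspose_mul_self X).1.eigenvalues) *
    (star (Matrix.posSemidef_conjTranspose_mul_self X).1.eigenvectorUnitary : Matrix I I ℂ)).trace.re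

end

section Aux

open Finset

/-- Summing a `dite` over `Fin k` that vanishes above `r ≤ k`. -/
lemma sum_dite_fin {M : Type*} [AddCommMonoid M] {r k : ℕ} (h : r ≤ k) (G : Fin r → M) :
    (∑ a : Fin k, if h' : (a : ℕ) < r then G ⟨a, h'⟩ else 0) = ∑ a : Fin r, G a := by
  rw [Fin.sum_univ_eq_sum_range (fun i => if h' : i < r then G ⟨i, h'⟩ else 0) k]
  rw [← Finset.sum_subset (Finset.range_subset_range.2 h)
    (fun i _ hi => dif_neg (by simpa using hi))]
  rw [Finset.sum_range fun i => _]
  exact Finset.sum_congr rfl fun a _ => by rw [dif_pos a.isLt]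

/-- Rank factorization: a matrix of rank at most `k` factors through `ℂ^k`. -/
lemma exists_rank_factorization {m n k : ℕ} (M : Matrix (Fin m) (Fin n) ℂ)
    (hM : M.rank ≤ k) :
    ∃ (A : Matrix (Fin m) (Fin k) ℂ) (W : Matrix (Fin k) (Fin n) ℂ), M = A * W := by
  classical
  set V : Submodule ℂ (Fin m → ℂ) := Submodule.span ℂ (Set.range Mᵀ) with hV
  have hrank : M.rank = Module.finrank ℂ V := M.rank_eq_finrank_span_cols
  have hrk : Module.finrank ℂ V ≤ k := hrank ▸ hM
  set r := Module.finrank ℂ V with hr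
  let b : Module.Basis (Fin r) ℂ V := Module.finBasis ℂ V
  have hmem : ∀ j, Mᵀ j ∈ V := fun j => Submodule.subset_span ⟨j, rfl⟩
  set A : Matrix (Fin m) (Fin k) ℂ :=
    Matrix.of fun i a => if h' : (a : ℕ) < r then (b ⟨a, h'⟩ : Fin m → ℂ) i else 0 with hA
  set W : Matrix (Fin k) (Fin n) ℂ :=
    Matrix.of fun a j => if h' : (a : ℕ) < r then b.repr ⟨Mᵀ j, hmem j⟩ ⟨a, h'⟩ else 0 with hW
  refine ⟨A, W, ?_⟩
  ext i j
  rw [Matrix.mul_apply]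
  have hterm : ∀ a : Fin k, A i a * W a j
      = if h' : (a : ℕ) < r then
          b.repr ⟨Mᵀ j, hmem j⟩ ⟨a, h'⟩ * (b ⟨a, h'⟩ : Fin m → ℂ) i else 0 := by
    intro a
    by_cases h' : (a : ℕ) < r <;> simp [hA, hW, h', mul_comm]
  rw [Fintype.sum_congr _ _ hterm,
    sum_dite_fin hrk (fun a' : Fin r => b.repr ⟨Mᵀ j, hmem j⟩ a' * (b a' : Fin m → ℂ) i)]
  have h2 := congrArg (Subtype.val) (b.sum_repr ⟨Mᵀ j, hmem j⟩)
  rw [Submodule.coe_sum] at h2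
  have h3 := congrFun h2 i
  simpa [Finset.sum_apply] using h3.symm

variable {m n k : ℕ} (Φ : Matrix (Fin n) (Fin n) ℂ →ₗ[ℂ] Matrix (Fin n) (Fin n) ℂ)

lemma tensorId_sum {I : Type*} [Fintype I] {ι : Type*} (s : Finset ι)
    (f : ι → Matrix (I × Fin n) (I × Fin n) ℂ) :
    tensorId Φ (∑ i ∈ s, f i) = ∑ i ∈ s, tensorId Φ (f i) := by
  ext p q
  have h1 : (Matrix.of fun s' t => (∑ i ∈ s, f i) (p.1, s') (q.1, t))
      = ∑ i ∈ s, Matrix.of fun s' t => f i (p.1, s') (q.1, t) := by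
    ext s' t; simp [Matrix.sum_apply]
  show Φ (Matrix.of fun s' t => (∑ i ∈ s, f i) (p.1, s') (q.1, t)) p.2 q.2 = _
  rw [h1, map_sum]
  simp [tensorId, Matrix.sum_apply]

lemma tensorId_smul {I : Type*} [Fintype I] (c : ℂ)
    (X : Matrix (I × Fin n) (I × Fin n) ℂ) :
    tensorId Φ (c • X) = c • tensorId Φ X := by
  ext p q
  have h1 : (Matrix.of fun s t => (c • X) (p.1, s) (q.1, t))
      = c • Matrix.of fun s t => X (p.1, s) (q.1, t) := by
    ext s t; simp
  show Φ (Matrix.of fun s t => (c • X) (p.1, s) (q.1, t)) p.2 q.2 = _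
  rw [h1, Φ.map_smul]
  simp [tensorId, Matrix.smul_apply]

lemma posSemidef_smul_complex {I : Type*} [Fintype I] {M : Matrix I I ℂ}
    (hM : M.PosSemidef) {c : ℝ} (hc : 0 ≤ c) : ((c : ℂ) • M).PosSemidef := by
  refine ⟨?_, fun x => ?_⟩
  · have h : ((c : ℂ) • M)ᴴ = star (c : ℂ) • Mᴴ := Matrix.conjTranspose_smul _ _
    rw [Matrix.IsHermitian, h, hM.1.eq, Complex.star_def, Complex.conj_ofReal]
  · exact (hM.smul (a := (c : ℂ)) (by exact_mod_cast hc)).2 x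

lemma posSemidef_vecMulVec {I : Type*} [Fintype I] [DecidableEq I] (v : I → ℂ) :
    (Matrix.vecMulVec v (star v)).PosSemidef := by
  rw [Matrix.vecMulVec_eq (ι := Unit), ← Matrix.conjTranspose_replicateCol]
  exact Matrix.posSemidef_self_mul_conjTranspose _

lemma vecMulVec_mulVec_star {I J : Type*} [Fintype I] [Fintype J]
    (G : Matrix I J ℂ) (w : J → ℂ) :
    Matrix.vecMulVec (G *ᵥ w) (star (G *ᵥ w))
      = G * Matrix.vecMulVec w (star w) * Gᴴ := by
  rw [Matrix.vecMulVec_eq (ι := Unit), Matrix.vecMulVec_eq (ι := Unit),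
    Matrix.replicateCol_mulVec, Matrix.star_mulVec, Matrix.replicateRow_vecMul, Matrix.mul_assoc,
    Matrix.mul_assoc, Matrix.mul_assoc]

/-- Entrywise formula for `(A ⊗ 1) Y (A ⊗ 1)ᴴ`. -/
lemma conj_kron_apply (A : Matrix (Fin m) (Fin k) ℂ)
    (Y : Matrix (Fin k × Fin n) (Fin k × Fin n) ℂ) (p q : Fin m × Fin n) :
    ((A ⊗ₖ (1 : Matrix (Fin n) (Fin n) ℂ)) * Y * (A ⊗ₖ (1 : Matrix (Fin n) (Fin n) ℂ))ᴴ) p q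
      = ∑ a : Fin k, ∑ b : Fin k,
          (A p.1 a * star (A q.1 b)) * Y (a, p.2) (b, q.2) := by
  simp only [Matrix.mul_apply, Matrix.conjTranspose_apply, Matrix.kroneckerMap_apply,
    Fintype.sum_prod_type, Matrix.one_apply, mul_ite, ite_mul, mul_one, mul_zero, zero_mul,
    one_mul, star_mul', star_one, star_zero, apply_ite (star : ℂ → ℂ),
    Finset.sum_ite_eq, Finset.sum_ite_eq', Finset.mem_univ, if_true,
    Finset.sum_mul, Finset.mul_sum]
  rw [Finset.sum_comm]
  refine Finset.sum_congr rfl fun b _ => Finset.sum_congr rfl fun a _ => ?_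
  ring

/-- `tensorId Φ` commutes with conjugation by `A ⊗ 1`. -/
lemma tensorId_conj (A : Matrix (Fin m) (Fin k) ℂ)
    (X : Matrix (Fin k × Fin n) (Fin k × Fin n) ℂ) :
    tensorId Φ ((A ⊗ₖ (1 : Matrix (Fin n) (Fin n) ℂ)) * X
        * (A ⊗ₖ (1 : Matrix (Fin n) (Fin n) ℂ))ᴴ)
      = (A ⊗ₖ (1 : Matrix (Fin n) (Fin n) ℂ)) * tensorId Φ X
          * (A ⊗ₖ (1 : Matrix (Fin n) (Fin n) ℂ))ᴴ := by
  ext p q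
  have h1 : (Matrix.of fun s t =>
        ((A ⊗ₖ (1 : Matrix (Fin n) (Fin n) ℂ)) * X
          * (A ⊗ₖ (1 : Matrix (Fin n) (Fin n) ℂ))ᴴ) ((p.1, s)) ((q.1, t)))
      = ∑ a : Fin k, ∑ b : Fin k, (A p.1 a * star (A q.1 b))
          • Matrix.of fun s t => X (a, s) (b, t) := by
    ext s t
    rw [Matrix.of_apply, conj_kron_apply]
    simp [Matrix.sum_apply]
  show Φ _ p.2 q.2 = _
  rw [h1, map_sum]
  simp only [map_sum, LinearMap.map_smul, Matrix.sum_apply, Matrix.smul_apply, smul_eq_mul]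
  rw [conj_kron_apply]
  rfl

/-- The key step: `tensorId Φ` maps rank-one projections onto Schmidt-rank-`≤ k`
vectors to PSD matrices, provided `Φ` is `k`-positive. -/
lemma tensorId_rankOne_psd
    (hΦ : ∀ X : Matrix (Fin k × Fin n) (Fin k × Fin n) ℂ,
      X.PosSemidef → (tensorId Φ X).PosSemidef)
    (v : Fin m × Fin n → ℂ) (hv : SchmidtRank v ≤ k) :
    (tensorId Φ (Matrix.vecMulVec v (star v))).PosSemidef := by
  obtain ⟨A, W, hAW⟩ := exists_rank_factorization (Matrix.of fun i j => v (i, j)) hv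
  set w : Fin k × Fin n → ℂ := fun p => W p.1 p.2 with hw
  have hv' : v = (A ⊗ₖ (1 : Matrix (Fin n) (Fin n) ℂ)) *ᵥ w := by
    funext p
    have h0 := congrFun (congrFun hAW p.1) p.2
    rw [Matrix.of_apply] at h0
    rw [show (p.1, p.2) = p from rfl] at h0
    rw [h0, Matrix.mul_apply]
    simp [Matrix.mulVec, dotProduct, Fintype.sum_prod_type, Matrix.one_apply,
      ite_mul, mul_ite, hw, Finset.sum_ite_eq, mul_one, mul_zero]
  rw [hv', vecMulVec_mulVec_star, tensorId_conj]
  exact (hΦ _ (posSemidef_vecMulVec w)).mul_mul_conjTranspose_same _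

/-- Any PSD matrix on `ℂ^k ⊗ ℂ^n` has Schmidt number at most `k`. -/
lemma psd_schmidtNumberLE {k n : ℕ} {X : Matrix (Fin k × Fin n) (Fin k × Fin n) ℂ}
    (hX : X.PosSemidef) : SchmidtNumberLE k X := by
  obtain ⟨B, rfl⟩ : ∃ B : Matrix (Fin k × Fin n) (Fin k × Fin n) ℂ, X = Bᴴ * B := by
    classical
    open scoped MatrixOrder in exact CStarAlgebra.nonneg_iff_eq_star_mul_self.mp hX.nonneg
  refine ⟨k * n, fun _ => 1, fun i p => star (B (finProdFinEquiv.symm i) p),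
    fun _ => zero_le_one, fun i => ?_, ?_⟩
  · exact (Matrix.rank_le_card_height _).trans (by simp)
  · calc Bᴴ * B = ∑ j : Fin k × Fin n, ((1 : ℝ) : ℂ) •
          Matrix.vecMulVec (fun p => star (B j p)) (star fun p => star (B j p)) := by
          ext p q
          simp [Matrix.mul_apply, Matrix.sum_apply, Matrix.vecMulVec_apply,
            Matrix.conjTranspose_apply]
      _ = _ := (Equiv.sum_comp finProdFinEquiv.symm (fun j => ((1 : ℝ) : ℂ) •
          Matrix.vecMulVec (fun p => star (B j p)) (star fun p => star (B j p)))).symm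

end Aux

/-- Corollary 4.4(c): `Φ : OMAX^k(M_n) → M_n` is completely positive iff `Φ` is `k`-positive. -/
theorem cp_on_kSuperMaximal_iff_kPositive (n k : ℕ) (hk : 1 ≤ k) (hkn : k ≤ n)
    (Φ : Matrix (Fin n) (Fin n) ℂ →ₗ[ℂ] Matrix (Fin n) (Fin n) ℂ) :
    (∀ (m : ℕ), 0 < m → ∀ ρ : Matrix (Fin m × Fin n) (Fin m × Fin n) ℂ,
        ρ.PosSemidef → SchmidtNumberLE k ρ → (tensorId Φ ρ).PosSemidef)
      ↔ (∀ X : Matrix (Fin k × Fin n) (Fin k × Fin n) ℂ,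
          X.PosSemidef → (tensorId Φ X).PosSemidef) := by
  constructor
  · intro h X hX
    exact h k hk X hX (psd_schmidtNumberLE hX)
  · rintro h m hm ρ hρ ⟨N, c, v, hc, hSR, rfl⟩
    rw [tensorId_sum]
    have hterm : ∀ i : Fin N, (tensorId Φ ((c i : ℂ) •
        Matrix.vecMulVec (v i) (star (v i)))).PosSemidef := by
      intro i
      rw [tensorId_smul]
      exact posSemidef_smul_complex (tensorId_rankOne_psd Φ h (v i) (hSR i)) (hc i)
    exact Finset.sum_induction _ _ (fun a b ha hb => ha.add hb)
      Matrix.PosSemidef.zero (fun i _ => hterm i)
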